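/- Let G be a cubic graph, F a matching in G with |F| = 4, and suppose G is theta-connected. If G \ F has a cut-edge f0, then there exists Y ⊆ V(G) with δ_G(Y) = F ∪ {f0}, |Y| = 5, and G[Y] contains a cycle of length exactly 5. -/

import Mathlib

open SimpleGraph

/-- `edgeCut G Y` is `δ_G(Y)`: the set of edges of `G` with exactly one end in `Y`. -/
def edgeCut {V : Type*} (G : SimpleGraph V) (Y : Finset V) : Set (Sym2 V) :=
  {e | e ∈ G.edgeSet ∧ ∃ u v : V, e = s(u, v) ∧ u ∈ Y ∧ v ∉ Y}

/-- A graph is theta-connected if it is cubic, has girth at least five, and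
`|δ_G(X)| ≥ 6` for all `X` with `|X|, |V ∖ X| ≥ 6`. -/
def ThetaConnected {V : Type*} [Fintype V] [DecidableEq V]
    (G : SimpleGraph V) [DecidableRel G.Adj] : Prop :=
  (∀ v, G.degree v = 3) ∧ 5 ≤ G.girth ∧
  ∀ X : Finset V, 6 ≤ X.card → 6 ≤ Xᶜ.card → 6 ≤ (edgeCut G X).ncard

section Helpers

set_option linter.unusedSectionVars false
set_option maxHeartbeats 3200000

variable {V : Type} [Fintype V] [DecidableEq V]

lemma my_cycle_length_ge {G : SimpleGraph V} (h5 : 5 ≤ G.girth) {v : V} {w : G.Walk v v}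
    (hw : w.IsCycle) : 5 ≤ w.length := by
  have h1 : G.egirth ≤ (w.length : ℕ∞) := le_egirth.mp le_rfl v w hw
  have h2 : G.girth ≤ w.length := by
    have := ENat.toNat_le_toNat h1 (by simp)
    simpa [SimpleGraph.girth] using this
  omega

lemma my_no_triangle {G : SimpleGraph V} (h5 : 5 ≤ G.girth) {p q r : V}
    (hpq : G.Adj p q) (hqr : G.Adj q r) (hrp : G.Adj r p) : False := by
  have hc : (Walk.cons hpq (Walk.cons hqr (Walk.cons hrp Walk.nil))).IsCycle := by
    rw [Walk.isCycle_def]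
    refine ⟨⟨?_⟩, by simp, ?_⟩
    · simp [hpq.ne, hqr.ne, hrp.ne, Sym2.eq, Sym2.rel_iff', hpq.ne', hqr.ne', hrp.ne']
    · simp [hqr.ne, hrp.ne, hqr.ne', hrp.ne', hpq.ne']
  have := my_cycle_length_ge h5 hc
  simp [Walk.length_cons] at this

lemma my_exists_cycle_min_degree {G : SimpleGraph V} [DecidableRel G.Adj]
    (hne : ∃ x y : V, G.Adj x y)
    (hdeg : ∀ v : V, (∃ y : V, G.Adj v y) → 2 ≤ G.degree v) :
    ∃ (v : V) (w : G.Walk v v), w.IsCycle := by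
  classical
  obtain ⟨x0, y0, hxy0⟩ := hne
  haveI : Nonempty V := ⟨x0⟩
  let S : Finset ℕ := (Finset.range (Fintype.card V + 1)).filter
      (fun n => ∃ (u v : V) (p : G.Walk u v), p.IsPath ∧ p.length = n)
  have h1S : 1 ∈ S := by
    refine Finset.mem_filter.mpr ⟨by simp [Fintype.card_pos], x0, y0, Walk.cons hxy0 Walk.nil, ?_, rfl⟩
    simp [Walk.cons_isPath_iff, hxy0.ne]
  have hSne : S.Nonempty := ⟨1, h1S⟩
  set N := S.max' hSne with hN
  have hNmem := S.max'_mem hSne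
  obtain ⟨hNr, u, v, p, hp, hlen⟩ := Finset.mem_filter.mp hNmem
  have hN1 : 1 ≤ N := S.le_max' 1 h1S
  -- all neighbors of u are on p
  have hnb : ∀ z : V, G.Adj u z → z ∈ p.support := by
    intro z hz
    by_contra hzs
    have hp' : (Walk.cons hz.symm p).IsPath := (Walk.cons_isPath_iff _ _).mpr ⟨hp, hzs⟩
    have hmem : N + 1 ∈ S := by
      refine Finset.mem_filter.mpr ⟨?_, z, v, Walk.cons hz.symm p, hp', by simp [hlen, hN]⟩
      have := hp'.length_lt
      simp only [Walk.length_cons, hlen] at this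
      simp [Finset.mem_range]
      omega
    have := S.le_max' _ hmem
    omega
  cases p with
  | nil => simp at hlen; omega
  | @cons _ y₀ _ h q =>
    have hdegu : 2 ≤ G.degree u := hdeg u ⟨y₀, h⟩
    have hcard : 1 < (G.neighborFinset u).card := by
      rwa [← G.card_neighborFinset_eq_degree] at hdegu
    obtain ⟨x, hxnf, hxy₀⟩ := Finset.exists_mem_ne hcard y₀
    have hxadj : G.Adj u x := by rwa [mem_neighborFinset] at hxnf
    have hxsupp : x ∈ (Walk.cons h q).support := hnb x hxadj
    set p := Walk.cons h q with hpdef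
    have ht : (p.takeUntil x hxsupp).IsPath := hp.takeUntil hxsupp
    have hedge : s(u, x) ∉ (p.takeUntil x hxsupp).edges := by
      intro hmem
      have hmem' : s(u, x) ∈ p.edges := p.edges_takeUntil_subset hxsupp hmem
      rw [hpdef, Walk.edges_cons, List.mem_cons] at hmem'
      rcases hmem' with heq | hq
      · rcases Sym2.eq_iff.mp heq with ⟨-, h2⟩ | ⟨h1, -⟩
        · exact hxy₀ h2
        · exact h.ne h1
      · have : u ∈ q.support := q.fst_mem_support_of_mem_edges hq
        rw [hpdef, Walk.cons_isPath_iff] at hp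
        exact hp.2 this
    refine ⟨u, Walk.cons hxadj (p.takeUntil x hxsupp).reverse, ?_⟩
    rw [Walk.cons_isCycle_iff]
    refine ⟨ht.reverse, ?_⟩
    rw [Walk.edges_reverse, List.mem_reverse]
    exact hedge

lemma my_cycle_of_edges (n : ℕ) :
    ∀ (G' : SimpleGraph V) [DecidableRel G'.Adj] (s : Finset V),
      s.Nonempty → s.card = n → (∀ x y : V, G'.Adj x y → x ∈ s) →
      s.card ≤ G'.edgeSet.ncard → ∃ (v : V) (w : G'.Walk v v), w.IsCycle := by
  induction n using Nat.strong_induction_on with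
  | _ n IH =>
  intro G' hdec s hne hcard hends hle'
  have hle : s.card ≤ G'.edgeFinset.card := by
    rwa [Set.ncard_eq_toFinset_card'] at hle'
  by_cases hex : ∃ v, (∃ y : V, G'.Adj v y) ∧ G'.degree v ≤ 1
  · obtain ⟨v, ⟨y, hvy⟩, hdegv⟩ := hex
    have hvs : v ∈ s := hends v y hvy
    have hys : y ∈ s.erase v := Finset.mem_erase.mpr ⟨hvy.ne', hends y v hvy.symm⟩
    set G'' : SimpleGraph V := G'.deleteEdges (G'.incidenceSet v) with hG''
    haveI : DecidableRel G''.Adj := Classical.decRel _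
    have hle'' : G'' ≤ G' := deleteEdges_le _
    have hends'' : ∀ x y : V, G''.Adj x y → x ∈ s.erase v := by
      intro x z hxz
      refine Finset.mem_erase.mpr ⟨?_, hends x z (hle'' hxz)⟩
      rintro rfl
      rw [hG'', deleteEdges_adj] at hxz
      exact hxz.2 (G'.mk'_mem_incidenceSet_left_iff.mpr hxz.1)
    have hedges'' : G'.edgeFinset.card - 1 ≤ G''.edgeFinset.card := by
      have h1 : G''.edgeFinset = G'.edgeFinset \ G'.incidenceFinset v := by
        ext e
        simp [hG'', edgeSet_deleteEdges, incidenceFinset, Set.mem_toFinset, edgeFinset]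
      have hsub : G'.incidenceFinset v ⊆ G'.edgeFinset := by
        intro e he
        simp only [incidenceFinset, Set.mem_toFinset] at he
        exact mem_edgeFinset.mpr he.1
      rw [h1, Finset.card_sdiff_of_subset hsub]
      have := G'.card_incidenceFinset_eq_degree v
      omega
    have hcard'' : (s.erase v).card = n - 1 := by rw [Finset.card_erase_of_mem hvs, hcard]
    have hn1 : 1 ≤ n := by rw [← hcard]; exact Finset.card_pos.mpr hne
    obtain ⟨v', w, hw⟩ := IH (n-1) (by omega) G'' (s.erase v) ⟨y, hys⟩ hcard''
      hends'' (by
        rw [Finset.card_erase_of_mem hvs, Set.ncard_eq_toFinset_card']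
        have hb : G''.edgeSet.toFinset = G''.edgeFinset := by
          ext e; simp [Set.mem_toFinset, mem_edgeFinset]
        rw [hb]
        omega)
    exact ⟨v', w.mapLe hle'', hw.mapLe hle''⟩
  · push_neg at hex
    have hedge : ∃ x y : V, G'.Adj x y := by
      have : 0 < G'.edgeFinset.card := lt_of_lt_of_le (Finset.card_pos.mpr hne) hle
      obtain ⟨e, he⟩ := Finset.card_pos.mp this
      induction e using Sym2.ind with
      | _ x y => exact ⟨x, y, mem_edgeFinset.mp he⟩
    exact my_exists_cycle_min_degree hedge (fun v hv => by
      have := hex v hv; omega)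

lemma my_filter_pair_card {Y : Finset V} {x y : V} (hxy : x ≠ y) :
    (Y.filter (fun v => v ∈ s(x,y))).card
      = (if x ∈ Y then 1 else 0) + (if y ∈ Y then 1 else 0) := by
  classical
  have h0 : Y.filter (fun v => v ∈ s(x,y)) = Y ∩ {x, y} := by
    ext v
    simp [Sym2.mem_iff]
  rw [h0]
  by_cases hx : x ∈ Y <;> by_cases hy : y ∈ Y <;>
    simp only [hx, hy, if_true, if_false]
  · have : Y ∩ {x, y} = {x, y} := by
      ext v; simp; rintro (rfl|rfl) <;> simp [hx, hy]
    rw [this, Finset.card_insert_of_notMem (by simp [hxy]), Finset.card_singleton]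
  · have : Y ∩ {x, y} = {x} := by
      ext v; simp
      constructor
      · rintro ⟨hv, rfl|rfl⟩
        · rfl
        · exact absurd hv hy
      · rintro rfl; exact ⟨hx, Or.inl rfl⟩
    rw [this, Finset.card_singleton]
  · have : Y ∩ {x, y} = {y} := by
      ext v; simp
      constructor
      · rintro ⟨hv, rfl|rfl⟩
        · exact absurd hv hx
        · rfl
      · rintro rfl; exact ⟨hy, Or.inr rfl⟩
    rw [this, Finset.card_singleton]
  · have : Y ∩ {x, y} = ∅ := by
      ext v; simp
      intro hv
      constructor
      · rintro rfl; exact absurd hv hx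
      · rintro rfl; exact absurd hv hy
    rw [this, Finset.card_empty]

lemma my_handshake (G : SimpleGraph V) [DecidableRel G.Adj] (Y : Finset V) :
    ∑ v ∈ Y, G.degree v =
      2 * (G.edgeFinset.filter (fun e => ∀ v ∈ e, v ∈ Y)).card +
      (G.edgeFinset.filter (fun e => ¬ (∀ v ∈ e, v ∈ Y) ∧ ∃ v ∈ e, v ∈ Y)).card := by
  classical
  have h1 : ∀ v : V, G.degree v = (G.edgeFinset.filter (fun e => v ∈ e)).card := by
    intro v
    rw [← G.card_incidenceFinset_eq_degree v]
    congr 1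
    ext e
    rw [mem_incidenceFinset, Finset.mem_filter, mem_edgeFinset]; exact Iff.rfl
  have htwo : ∀ e ∈ G.edgeFinset.filter (fun e => ∀ v ∈ e, v ∈ Y),
      (Y.filter (fun v => v ∈ e)).card = 2 := by
    intro e he
    rw [Finset.mem_filter] at he
    obtain ⟨he1, he2⟩ := he
    induction e using Sym2.ind with
    | _ x y =>
      have hadj : G.Adj x y := mem_edgeFinset.mp he1
      rw [my_filter_pair_card hadj.ne, if_pos (he2 x (by simp)), if_pos (he2 y (by simp))]
  have hone : ∀ e ∈ G.edgeFinset.filter (fun e => ¬ (∀ v ∈ e, v ∈ Y) ∧ ∃ v ∈ e, v ∈ Y),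
      (Y.filter (fun v => v ∈ e)).card = 1 := by
    intro e he
    simp only [Finset.mem_filter] at he
    obtain ⟨he1, hnall, v0, hv0e, hv0⟩ := he
    induction e using Sym2.ind with
    | _ x y =>
      have hadj : G.Adj x y := mem_edgeFinset.mp he1
      rw [my_filter_pair_card hadj.ne]
      simp only [Sym2.mem_iff] at hnall hv0e
      push_neg at hnall
      obtain ⟨z, hz1, hz2⟩ := hnall
      rcases hz1 with rfl | rfl <;> rcases hv0e with rfl | rfl <;>
        simp [hz2, hv0] <;> tauto
  calc ∑ v ∈ Y, G.degree v
      = ∑ v ∈ Y, ∑ e ∈ G.edgeFinset, if v ∈ e then 1 else 0 := by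
        simp_rw [h1, Finset.card_filter]
    _ = ∑ e ∈ G.edgeFinset, (Y.filter (fun v => v ∈ e)).card := by
        rw [Finset.sum_comm]; simp_rw [Finset.card_filter]
    _ = 2 * (G.edgeFinset.filter (fun e => ∀ v ∈ e, v ∈ Y)).card +
      (G.edgeFinset.filter (fun e => ¬ (∀ v ∈ e, v ∈ Y) ∧ ∃ v ∈ e, v ∈ Y)).card := by
        rw [← Finset.sum_filter_add_sum_filter_not G.edgeFinset (fun e => ∀ v ∈ e, v ∈ Y)]
        congr 1
        · rw [Finset.sum_congr rfl htwo, Finset.sum_const, smul_eq_mul, mul_comm]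
        · rw [← Finset.sum_filter_add_sum_filter_not
            (G.edgeFinset.filter (fun e => ¬ ∀ v ∈ e, v ∈ Y)) (fun e => ∃ v ∈ e, v ∈ Y)]
          have hz : ∑ e ∈ ((G.edgeFinset.filter (fun e => ¬ ∀ v ∈ e, v ∈ Y)).filter
              (fun e => ¬ ∃ v ∈ e, v ∈ Y)), (Y.filter (fun v => v ∈ e)).card = 0 := by
            apply Finset.sum_eq_zero
            intro e he
            simp only [Finset.mem_filter] at he
            rw [Finset.card_eq_zero]
            ext v; simp only [Finset.mem_filter, Finset.notMem_empty, iff_false]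
            rintro ⟨hv, hve⟩
            exact he.2 ⟨v, hve, hv⟩
          rw [hz, add_zero, Finset.filter_filter]
          have hseteq : (G.edgeFinset.filter (fun e => (¬ ∀ v ∈ e, v ∈ Y) ∧ ∃ v ∈ e, v ∈ Y))
              = (G.edgeFinset.filter (fun e => ¬ (∀ v ∈ e, v ∈ Y) ∧ ∃ v ∈ e, v ∈ Y)) := rfl
          rw [hseteq, Finset.sum_congr rfl hone, Finset.sum_const, smul_eq_mul, mul_one]

lemma my_edgeCut_compl (G : SimpleGraph V) (Y : Finset V) :
    edgeCut G Yᶜ = edgeCut G Y := by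
  have key : ∀ Z : Finset V, edgeCut G Z ⊆ edgeCut G Zᶜ := by
    rintro Z e ⟨heE, u, v, rfl, hu, hv⟩
    exact ⟨heE, v, u, Sym2.eq_swap, by simpa using hv, by simpa using hu⟩
  apply Set.Subset.antisymm
  · have := key Yᶜ; rwa [compl_compl] at this
  · exact key Y

lemma my_cutF_eq (G : SimpleGraph V) [DecidableRel G.Adj] (Y : Finset V) :
    edgeCut G Y =
      ↑(G.edgeFinset.filter (fun e => ¬ (∀ v ∈ e, v ∈ Y) ∧ ∃ v ∈ e, v ∈ Y)) := by
  classical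
  ext e
  simp only [Finset.coe_filter, Set.mem_setOf_eq, mem_edgeFinset, edgeCut]
  constructor
  · rintro ⟨heE, u, v, rfl, hu, hv⟩
    refine ⟨heE, ?_, u, by simp, hu⟩
    intro hall
    exact hv (hall v (by simp))
  · rintro ⟨heE, hnall, v0, hv0e, hv0⟩
    refine ⟨heE, ?_⟩
    induction e using Sym2.ind with
    | _ x y =>
      push_neg at hnall
      obtain ⟨z, hz1, hz2⟩ := hnall
      simp only [Sym2.mem_iff] at hz1 hv0e
      rcases hz1 with rfl | rfl <;> rcases hv0e with rfl | rfl
      · exact absurd hv0 hz2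
      · exact ⟨v0, z, Sym2.eq_swap, hv0, hz2⟩
      · exact ⟨v0, z, rfl, hv0, hz2⟩
      · exact absurd hv0 hz2

lemma my_walk_support_mem {G' : SimpleGraph V} {P : V → Prop}
    (hadj : ∀ x y : V, G'.Adj x y → P y) {u v : V} (p : G'.Walk u v) (hu : P u) :
    ∀ z ∈ p.support, P z := by
  induction p with
  | nil => intro z hz; simp at hz; rwa [hz]
  | cons h q ih =>
    intro z hz
    rw [Walk.support_cons, List.mem_cons] at hz
    rcases hz with rfl | hz
    · exact hu
    · exact ih (hadj _ _ h) z hz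

def restrictG (G : SimpleGraph V) (Y : Finset V) : SimpleGraph V where
  Adj u v := G.Adj u v ∧ u ∈ Y ∧ v ∈ Y
  symm := ⟨by rintro u v ⟨h, h1, h2⟩; exact ⟨h.symm, h2, h1⟩⟩
  loopless := ⟨by rintro u ⟨h, -⟩; exact G.irrefl h⟩

lemma main_aux (G : SimpleGraph V) [DecidableRel G.Adj]
    (hcubic : ∀ v : V, G.degree v = 3) (hgirth : 5 ≤ G.girth)
    (F : Finset (Sym2 V)) (hFcard : F.card = 4)
    (hFmatching : ∀ e ∈ F, ∀ f ∈ F, e ≠ f → ∀ v : V, ¬ (v ∈ e ∧ v ∈ f))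
    (f0 : Sym2 V) (hf0F : f0 ∉ F)
    (Y : Finset V) (hYcard : Y.card ≤ 5)
    (hsub : edgeCut G Y ⊆ ↑F ∪ {f0}) (hf0cut : f0 ∈ edgeCut G Y) :
    edgeCut G Y = ↑F ∪ {f0} ∧ Y.card = 5 ∧
      ∃ (v : V) (w : G.Walk v v), w.IsCycle ∧ w.length = 5 ∧
        ∀ u ∈ w.support, u ∈ Y := by
  classical
  set cutF := G.edgeFinset.filter (fun e => ¬ (∀ v ∈ e, v ∈ Y) ∧ ∃ v ∈ e, v ∈ Y) with hcutFdef
  set einF := G.edgeFinset.filter (fun e => ∀ v ∈ e, v ∈ Y) with heinFdef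
  have hcutset : edgeCut G Y = ↑cutF := my_cutF_eq G Y
  have hhs : 3 * Y.card = 2 * einF.card + cutF.card := by
    have h := my_handshake G Y
    rw [Finset.sum_congr rfl (fun v _ => hcubic v), Finset.sum_const, smul_eq_mul, mul_comm] at h
    exact h
  have hf0cutF : f0 ∈ cutF := by
    rw [hcutset] at hf0cut; exact hf0cut
  have hcutFsub : ∀ e ∈ cutF, e ∈ F ∨ e = f0 := by
    intro e he
    have : e ∈ (↑F ∪ {f0} : Set (Sym2 V)) := hsub (by rw [hcutset]; exact he)
    tauto
  have hcutcard : cutF.card = (cutF ∩ F).card + 1 := by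
    have hins : cutF = insert f0 (cutF ∩ F) := by
      ext e
      constructor
      · intro he
        rcases hcutFsub e he with h | rfl
        · exact Finset.mem_insert_of_mem (Finset.mem_inter.mpr ⟨he, h⟩)
        · exact Finset.mem_insert_self _ _
      · intro he
        rcases Finset.mem_insert.mp he with rfl | h
        · exact hf0cutF
        · exact (Finset.mem_inter.mp h).1
    nth_rewrite 1 [hins]
    rw [Finset.card_insert_of_notMem (by simp [hf0F])]
  obtain ⟨hf0E, u0, v0, hf0eq, hu0, hv0⟩ := hf0cut
  haveI : Inhabited V := ⟨u0⟩
  have hendY : ∀ e ∈ cutF ∩ F, ∃ u : V, u ∈ Y ∧ u ∈ e := by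
    intro e he
    have : e ∈ edgeCut G Y := by rw [hcutset]; exact Finset.mem_coe.mpr (Finset.mem_inter.mp he).1
    obtain ⟨-, u, v, rfl, hu, -⟩ := this
    exact ⟨u, hu, by simp⟩
  choose! pick hpick1 hpick2 using hendY
  have hinj : (cutF ∩ F).card ≤ Y.card := by
    apply Finset.card_le_card_of_injOn pick (fun e he => hpick1 e he)
    intro e he e' he' heq
    by_contra hne
    simp only [Finset.coe_inter, Set.mem_inter_iff, Finset.mem_coe] at he he'
    exact hFmatching e he.2 e' he'.2 hne (pick e)
      ⟨hpick2 e (Finset.mem_inter.mpr he), heq ▸ hpick2 e' (Finset.mem_inter.mpr he')⟩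
  have hkle : (cutF ∩ F).card ≤ 4 := by
    calc (cutF ∩ F).card ≤ F.card := Finset.card_le_card Finset.inter_subset_right
      _ = 4 := hFcard
  have heinge : Y.card ≤ einF.card := by omega
  have hGYle : restrictG G Y ≤ G := by intro u v h; exact h.1
  haveI : DecidableRel (restrictG G Y).Adj := Classical.decRel _
  have hGYedge : (restrictG G Y).edgeSet = ↑einF := by
    ext e
    induction e using Sym2.ind with
    | _ x y =>
      simp only [heinFdef, Finset.coe_filter, Set.mem_setOf_eq, mem_edgeFinset, mem_edgeSet, restrictG]
      constructor
      · rintro ⟨h, h1, h2⟩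
        refine ⟨h, ?_⟩
        intro z hz
        rcases Sym2.mem_iff.mp hz with rfl | rfl <;> assumption
      · rintro ⟨h, hall⟩
        exact ⟨h, hall x (by simp), hall y (by simp)⟩
  have hYne : Y.Nonempty := ⟨u0, hu0⟩
  obtain ⟨v, w, hw⟩ := my_cycle_of_edges Y.card (restrictG G Y) Y hYne rfl
    (fun x y (h : (restrictG G Y).Adj x y) => h.2.1)
    (by rw [hGYedge, Set.ncard_coe_finset]; exact heinge)
  have hvY : v ∈ Y := by
    cases w with
    | nil => exact absurd rfl hw.ne_nil
    | cons h q => exact h.2.1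
  have hsuppY : ∀ z ∈ w.support, z ∈ Y := my_walk_support_mem (fun x y (h : (restrictG G Y).Adj x y) => h.2.2) w hvY
  have hwG : (w.mapLe hGYle).IsCycle := hw.mapLe hGYle
  have hlen5 : 5 ≤ w.length := by
    have := my_cycle_length_ge hgirth hwG
    simpa [Walk.length_map] using this
  have hndtail : w.support.tail.Nodup := hw.support_nodup
  have hsubtail : w.support.tail.toFinset ⊆ Y :=
    fun z hz => hsuppY z (List.mem_of_mem_tail (List.mem_toFinset.mp hz))
  have htailcard : w.support.tail.toFinset.card = w.length := by
    rw [List.toFinset_card_of_nodup hndtail, List.length_tail, Walk.length_support]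
    omega
  have hlenle : w.length ≤ Y.card := by
    have := Finset.card_le_card hsubtail
    omega
  have hY5 : Y.card = 5 := by omega
  have hwlen : w.length = 5 := by omega
  have hsteq : w.support.tail.toFinset = Y :=
    Finset.eq_of_subset_of_card_le hsubtail (by omega)
  have hein5 : einF.card = 5 := by
    by_contra hne5
    have h6 : 6 ≤ einF.card := by omega
    have hednd : w.edges.Nodup := hw.edges_nodup
    have hedsub : w.edges.toFinset ⊆ einF := by
      intro e he
      rw [List.mem_toFinset] at he
      have h1 : e ∈ (restrictG G Y).edgeSet := w.edges_subset_edgeSet he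
      rw [hGYedge] at h1
      exact Finset.mem_coe.mp h1
    have hedcard : w.edges.toFinset.card = 5 := by
      rw [List.toFinset_card_of_nodup hednd, Walk.length_edges, hwlen]
    have hex : ∃ g ∈ einF, g ∉ w.edges.toFinset := by
      by_contra hall
      push_neg at hall
      have := Finset.card_le_card (fun g hg => hall g hg)
      omega
    obtain ⟨g, hgein, hgnot⟩ := hex
    have hgY : ∀ z ∈ g, z ∈ Y := (Finset.mem_filter.mp hgein).2
    have hgE : g ∈ G.edgeSet := mem_edgeFinset.mp (Finset.mem_filter.mp hgein).1
    induction g using Sym2.ind with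
    | _ p q =>
    have hGpq : G.Adj p q := hgE
    have hpY : p ∈ w.support.tail := by
      have : p ∈ Y := hgY p (by simp)
      rw [← hsteq] at this
      exact List.mem_toFinset.mp this
    have hqY : q ∈ w.support.tail := by
      have : q ∈ Y := hgY q (by simp)
      rw [← hsteq] at this
      exact List.mem_toFinset.mp this
    obtain ⟨a1, a2, a3, a4, h1, h2, h3, h4, h5, rfl⟩ :
        ∃ (a1 a2 a3 a4 : V) (h1 : (restrictG G Y).Adj v a1) (h2 : (restrictG G Y).Adj a1 a2)
          (h3 : (restrictG G Y).Adj a2 a3) (h4 : (restrictG G Y).Adj a3 a4)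
          (h5 : (restrictG G Y).Adj a4 v),
          w = Walk.cons h1 (Walk.cons h2 (Walk.cons h3 (Walk.cons h4 (Walk.cons h5 Walk.nil)))) := by
      clear hpY hqY hsteq htailcard hsubtail hndtail hsuppY hwG hednd hedsub hgnot
      cases w with
      | nil => simp at hwlen
      | cons h1 w1 =>
        cases w1 with
        | nil => simp at hwlen
        | cons h2 w2 =>
          cases w2 with
          | nil => simp at hwlen
          | cons h3 w3 =>
            cases w3 with
            | nil => simp at hwlen
            | cons h4 w4 =>
              cases w4 with
              | nil => simp at hwlen
              | cons h5 w5 =>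
                cases w5 with
                | nil => exact ⟨_, _, _, _, h1, h2, h3, h4, h5, rfl⟩
                | cons h6 w6 => simp [Walk.length_cons] at hwlen
    have hnd5 : (a1 ≠ a2 ∧ a1 ≠ a3 ∧ a1 ≠ a4 ∧ a1 ≠ v) ∧ (a2 ≠ a3 ∧ a2 ≠ a4 ∧ a2 ≠ v)
        ∧ (a3 ≠ a4 ∧ a3 ≠ v) ∧ a4 ≠ v := by
      have := hw.support_nodup
      simp [Walk.support_cons, List.nodup_cons] at this
      tauto
    have hgnot' : s(p, q) ∉ [s(v,a1), s(a1,a2), s(a2,a3), s(a3,a4), s(a4,v)] := by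
      intro hmem
      apply hgnot
      rw [List.mem_toFinset]
      simpa [Walk.edges_cons] using hmem
    have hp' : p = a1 ∨ p = a2 ∨ p = a3 ∨ p = a4 ∨ p = v := by
      simpa [Walk.support_cons] using hpY
    have hq' : q = a1 ∨ q = a2 ∨ q = a3 ∨ q = a4 ∨ q = v := by
      simpa [Walk.support_cons] using hqY
    have b1 : G.Adj v a1 := h1.1
    have b2 : G.Adj a1 a2 := h2.1
    have b3 : G.Adj a2 a3 := h3.1
    have b4 : G.Adj a3 a4 := h4.1
    have b5 : G.Adj a4 v := h5.1
    rcases hp' with rfl | rfl | rfl | rfl | rfl <;> rcases hq' with rfl | rfl | rfl | rfl | rfl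
    · exact hGpq.ne rfl
    · exact hgnot' (by simp)
    · exact my_no_triangle hgirth b2 b3 hGpq.symm
    · exact my_no_triangle hgirth b5 b1 hGpq
    · exact hgnot' (by rw [Sym2.eq_swap]; simp)
    · exact hgnot' (by rw [Sym2.eq_swap]; simp)
    · exact hGpq.ne rfl
    · exact hgnot' (by simp)
    · exact my_no_triangle hgirth b3 b4 hGpq.symm
    · exact my_no_triangle hgirth b1 b2 hGpq
    · exact my_no_triangle hgirth b2 b3 hGpq
    · exact hgnot' (by rw [Sym2.eq_swap]; simp)
    · exact hGpq.ne rfl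
    · exact hgnot' (by simp)
    · exact my_no_triangle hgirth b4 b5 hGpq.symm
    · exact my_no_triangle hgirth b5 b1 hGpq.symm
    · exact my_no_triangle hgirth b3 b4 hGpq
    · exact hgnot' (by rw [Sym2.eq_swap]; simp)
    · exact hGpq.ne rfl
    · exact hgnot' (by simp)
    · exact hgnot' (by simp)
    · exact my_no_triangle hgirth b1 b2 hGpq.symm
    · exact my_no_triangle hgirth b4 b5 hGpq
    · exact hgnot' (by rw [Sym2.eq_swap]; simp)
    · exact hGpq.ne rfl
  have hcut5 : cutF.card = 5 := by omega
  have hFsubcut : F ⊆ cutF := by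
    have hinter : cutF ∩ F = F := by
      apply Finset.eq_of_subset_of_card_le Finset.inter_subset_right
      omega
    intro e he
    rw [← hinter] at he
    exact (Finset.mem_inter.mp he).1
  refine ⟨?_, hY5, v, w.mapLe hGYle, hwG, by simp [Walk.length_map, hwlen], ?_⟩
  · apply Set.Subset.antisymm hsub
    rintro e (he | he)
    · rw [hcutset]
      exact Finset.mem_coe.mpr (hFsubcut (Finset.mem_coe.mp he))
    · rw [Set.mem_singleton_iff] at he
      subst he
      rw [hcutset]
      exact Finset.mem_coe.mpr hf0cutF
  · intro u hu
    apply hsuppY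
    simpa [Walk.support_mapLe_eq_support] using hu

lemma my_small_cut_false (G : SimpleGraph V) [DecidableRel G.Adj]
    (hcubic : ∀ v : V, G.degree v = 3) (hgirth : 5 ≤ G.girth)
    (F : Finset (Sym2 V)) (hFcard : F.card = 4)
    (hFmatching : ∀ e ∈ F, ∀ f ∈ F, e ≠ f → ∀ v : V, ¬ (v ∈ e ∧ v ∈ f))
    (Y : Finset V) (hYne : Y.Nonempty) (hYcard : Y.card ≤ 5)
    (hsub : edgeCut G Y ⊆ ↑F) : False := by
  classical
  by_cases hne : (edgeCut G Y).Nonempty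
  · obtain ⟨e, he⟩ := hne
    have heF : e ∈ F := hsub he
    obtain ⟨heE, x, y, rfl, hx, hy⟩ := he
    have hxy : G.Adj x y := heE
    set F1 := insert s(x,x) (F.erase s(x,y)) with hF1
    have hxxF : s(x,x) ∉ F := by
      intro h
      by_cases hq : s(x,x) = s(x,y)
      · rcases Sym2.eq_iff.mp hq with ⟨-, h2⟩ | ⟨h1, -⟩
        · exact hxy.ne h2
        · exact hxy.ne h1
      · exact hFmatching _ h _ heF hq x ⟨by simp, by simp⟩
    have hF1card : F1.card = 4 := by
      rw [Finset.card_insert_of_notMem (fun h => hxxF (Finset.mem_of_mem_erase h)),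
        Finset.card_erase_of_mem heF, hFcard]
    have hF1m : ∀ e ∈ F1, ∀ f ∈ F1, e ≠ f → ∀ v : V, ¬ (v ∈ e ∧ v ∈ f) := by
      have key : ∀ f ∈ F.erase s(x,y), ∀ v : V, ¬ (v ∈ s(x,x) ∧ v ∈ f) := by
        rintro f hf v ⟨hv1, hv2⟩
        have hvx : v = x := by simpa using hv1
        rw [hvx] at hv2
        exact hFmatching _ (Finset.mem_of_mem_erase hf) _ heF (Finset.ne_of_mem_erase hf) x
          ⟨hv2, by simp⟩
      rintro e he f hf hef v ⟨hve, hvf⟩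
      rcases Finset.mem_insert.mp he with rfl | he' <;> rcases Finset.mem_insert.mp hf with rfl | hf'
      · exact hef rfl
      · exact key f hf' v ⟨hve, hvf⟩
      · exact key e he' v ⟨hvf, hve⟩
      · exact hFmatching e (Finset.mem_of_mem_erase he') f (Finset.mem_of_mem_erase hf') hef v
          ⟨hve, hvf⟩
    have hf0F1 : s(x,y) ∉ F1 := by
      intro h
      rcases Finset.mem_insert.mp h with hq | h'
      · rcases Sym2.eq_iff.mp hq with ⟨-, h2⟩ | ⟨-, h2⟩ <;> exact hxy.ne h2.symm
      · exact Finset.notMem_erase _ _ h'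
    have hsub1 : edgeCut G Y ⊆ ↑F1 ∪ {s(x,y)} := by
      intro e he
      have heF' : e ∈ F := hsub he
      by_cases hq : e = s(x,y)
      · exact Or.inr hq
      · exact Or.inl (Finset.mem_coe.mpr (Finset.mem_insert_of_mem (Finset.mem_erase.mpr ⟨hq, heF'⟩)))
    have hf0cut : s(x,y) ∈ edgeCut G Y := ⟨heE, x, y, rfl, hx, hy⟩
    obtain ⟨h1, -, -⟩ := main_aux G hcubic hgirth F1 hF1card hF1m (s(x,y)) hf0F1 Y hYcard hsub1 hf0cut
    have hxx : s(x,x) ∈ edgeCut G Y := by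
      rw [h1]; exact Or.inl (Finset.mem_coe.mpr (Finset.mem_insert_self _ _))
    exact G.irrefl (G.mem_edgeSet.mp hxx.1)
  · rw [Set.not_nonempty_iff_eq_empty] at hne
    obtain ⟨y, hy⟩ := hYne
    have hclosed : ∀ u ∈ Y, ∀ w, G.Adj u w → w ∈ Y := by
      intro u hu w huw
      by_contra hw
      have : s(u,w) ∈ edgeCut G Y := ⟨G.mem_edgeSet.mpr huw, u, w, rfl, hu, hw⟩
      rw [hne] at this
      exact this
    have hdy : 0 < (G.neighborFinset y).card := by rw [card_neighborFinset_eq_degree, hcubic]; norm_num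
    obtain ⟨n, hn⟩ := Finset.card_pos.mp hdy
    have hyn : G.Adj y n := by rwa [mem_neighborFinset] at hn
    have hdisj : Disjoint (G.neighborFinset y) (G.neighborFinset n) := by
      rw [Finset.disjoint_left]
      intro z hz1 hz2
      rw [mem_neighborFinset] at hz1 hz2
      exact my_no_triangle hgirth hyn hz2 hz1.symm
    have hsubY : G.neighborFinset y ∪ G.neighborFinset n ⊆ Y := by
      intro z hz
      rcases Finset.mem_union.mp hz with h | h
      · rw [mem_neighborFinset] at h
        exact hclosed y hy z h
      · rw [mem_neighborFinset] at h
        exact hclosed n (hclosed y hy n hyn) z h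
    have := Finset.card_le_card hsubY
    rw [Finset.card_union_of_disjoint hdisj, card_neighborFinset_eq_degree,
      card_neighborFinset_eq_degree, hcubic, hcubic] at this
    omega

end Helpers

/-- if `G` is a theta-connected (cubic) graph, `F` is a matching of four
edges of `G`, and `G ∖ F` has a cut-edge `f0`, then there is a set `Y` of five vertices
with `δ_G(Y) = F ∪ {f0}` containing a cycle of `G` of length exactly five. -/
theorem matching_cut_gives_pentagon
    {V : Type} [Fintype V] [DecidableEq V]
    (G : SimpleGraph V) [DecidableRel G.Adj]
    (htheta : ThetaConnected G)
    (F : Finset (Sym2 V)) (hFcard : F.card = 4)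
    (hFedges : ↑F ⊆ G.edgeSet)
    (hFmatching : ∀ e ∈ F, ∀ f ∈ F, e ≠ f → ∀ v : V, ¬ (v ∈ e ∧ v ∈ f))
    (f0 : Sym2 V)
    (hbridge : (G.deleteEdges ↑F).IsBridge f0) :
    ∃ Y : Finset V, edgeCut G Y = ↑F ∪ {f0} ∧ Y.card = 5 ∧
      ∃ (v : V) (w : G.Walk v v), w.IsCycle ∧ w.length = 5 ∧
        ∀ u ∈ w.support, u ∈ Y := by
  classical
  obtain ⟨hcubic, hgirth, hcut6⟩ := htheta
  induction f0 using Sym2.ind with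
  | _ a b =>
  rw [isBridge_iff] at hbridge
  by_cases hab : (G.deleteEdges ↑F).Adj a b
  swap
  · exfalso
    set Y1 : Finset V := Finset.univ.filter
      (fun v => ((G.deleteEdges ↑F).deleteEdges {s(a,b)}).Reachable a v) with hY1
    have haY1 : a ∈ Y1 := by
      simp only [hY1, Finset.mem_filter, Finset.mem_univ, true_and]; exact Reachable.refl a
    have hbY1 : b ∉ Y1 := by
      simp only [hY1, Finset.mem_filter, Finset.mem_univ, true_and]; exact hbridge
    have hsub1 : edgeCut G Y1 ⊆ ↑F := by
      rintro e ⟨heE, u, v, rfl, hu, hv⟩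
      by_contra hor
      have hadj' : ((G.deleteEdges ↑F).deleteEdges {s(a,b)}).Adj u v := by
        rw [deleteEdges_adj, deleteEdges_adj]
        refine ⟨⟨G.mem_edgeSet.mp heE, hor⟩, ?_⟩
        intro h
        rw [Set.mem_singleton_iff] at h
        apply hab
        rw [deleteEdges_adj, ← G.mem_edgeSet, ← h]
        exact ⟨heE, hor⟩
      have : ((G.deleteEdges ↑F).deleteEdges {s(a,b)}).Reachable a v := by
        simp only [hY1, Finset.mem_filter, Finset.mem_univ, true_and] at hu
        exact hu.trans hadj'.reachable
      apply hv
      simp only [hY1, Finset.mem_filter, Finset.mem_univ, true_and]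
      exact this
    have hc4 : (edgeCut G Y1).ncard ≤ 4 := by
      calc (edgeCut G Y1).ncard ≤ (↑F : Set (Sym2 V)).ncard :=
            Set.ncard_le_ncard hsub1 F.finite_toSet
        _ = 4 := by rw [Set.ncard_coe_finset, hFcard]
    rcases le_or_gt Y1.card 5 with h5 | h5
    · exact my_small_cut_false G hcubic hgirth F hFcard hFmatching Y1 ⟨a, haY1⟩ h5 hsub1
    · rcases le_or_gt Y1ᶜ.card 5 with h5c | h5c
      · exact my_small_cut_false G hcubic hgirth F hFcard hFmatching Y1ᶜ ⟨b, by simpa using hbY1⟩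
          h5c (by rw [my_edgeCut_compl]; exact hsub1)
      · have := hcut6 Y1 (by omega) (by omega)
        omega
  have hnreach : ¬ (G.deleteEdges ↑F \ fromEdgeSet {s(a,b)}).Reachable a b := hbridge
  set H' := G.deleteEdges ↑F \ fromEdgeSet {s(a,b)} with hH'
  have hf0F : s(a,b) ∉ F := by
    have := hab  -- hab : (G.deleteEdges ↑F).Adj a b
    rw [deleteEdges_adj] at this
    exact this.2
  have hGab : G.Adj a b := (deleteEdges_adj.mp hab).1
  set Y0 : Finset V := Finset.univ.filter (fun v => H'.Reachable a v) with hY0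
  have haY0 : a ∈ Y0 := by simp only [hY0, Finset.mem_filter, Finset.mem_univ, true_and]; exact Reachable.refl a
  have hbY0 : b ∉ Y0 := by simpa [hY0] using hnreach
  have hsub0 : edgeCut G Y0 ⊆ ↑F ∪ {s(a,b)} := by
    rintro e ⟨heE, u, v, rfl, hu, hv⟩
    by_contra hor
    simp only [Set.mem_union, Set.mem_singleton_iff, Finset.mem_coe] at hor
    push_neg at hor
    have hadj' : H'.Adj u v := by
      rw [hH', sdiff_adj, deleteEdges_adj, fromEdgeSet_adj]
      refine ⟨⟨G.mem_edgeSet.mp heE, hor.1⟩, ?_⟩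
      rintro ⟨h1, -⟩
      exact hor.2 (by simpa using h1)
    have : H'.Reachable a v := by
      simp only [hY0, Finset.mem_filter] at hu
      exact hu.2.trans hadj'.reachable
    simp [hY0, this] at hv
  have hf0cut0 : s(a,b) ∈ edgeCut G Y0 := ⟨G.mem_edgeSet.mpr hGab, a, b, rfl, haY0, hbY0⟩
  have hcutle5 : ∀ Z : Finset V, edgeCut G Z ⊆ ↑F ∪ {s(a,b)} → (edgeCut G Z).ncard ≤ 5 := by
    intro Z hZ
    calc (edgeCut G Z).ncard ≤ (↑F ∪ {s(a,b)} : Set (Sym2 V)).ncard := by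
          exact Set.ncard_le_ncard hZ (Set.Finite.union (F.finite_toSet) (Set.finite_singleton _))
      _ ≤ (↑(F ∪ {s(a,b)}) : Set (Sym2 V)).ncard := by
          apply le_of_eq; congr 1; simp
      _ = (F ∪ {s(a,b)}).card := Set.ncard_coe_finset _
      _ ≤ F.card + 1 := by
          apply le_trans (Finset.card_union_le _ _); simp
      _ ≤ 5 := by omega
  rcases le_or_gt Y0.card 5 with h5 | h5
  · obtain ⟨h1, h2, h3⟩ := main_aux G hcubic hgirth F hFcard hFmatching (s(a,b)) hf0F Y0 h5 hsub0 hf0cut0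
    exact ⟨Y0, h1, h2, h3⟩
  · have hsubc : edgeCut G Y0ᶜ ⊆ ↑F ∪ {s(a,b)} := by rw [my_edgeCut_compl]; exact hsub0
    have hf0cutc : s(a,b) ∈ edgeCut G Y0ᶜ := by rw [my_edgeCut_compl]; exact hf0cut0
    rcases le_or_gt Y0ᶜ.card 5 with h5c | h5c
    · obtain ⟨h1, h2, h3⟩ := main_aux G hcubic hgirth F hFcard hFmatching (s(a,b)) hf0F Y0ᶜ h5c hsubc hf0cutc
      exact ⟨Y0ᶜ, h1, h2, h3⟩
    · have := hcut6 Y0 (by omega) (by omega)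
      have := hcutle5 Y0 hsub0
      omega
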